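/- Two skew-symmetric n×n complex matrix pencils are congruent if and only if they are strictly equivalent. That is, if λA − B and λC − D are pencils with Aᵀ = −A, Bᵀ = −B, Cᵀ = −C, Dᵀ = −D, and there exist invertible matrices Q, R ∈ ℂ^{n×n} with QAR = C and QBR = D, then there exists an invertible matrix S ∈ ℂ^{n×n} with SᵀAS = C and SᵀBS = D (and conversely, congruent pencils are strictly equivalent). -/

import Mathlib

open Matrix

noncomputable section

abbrev Mat (n : ℕ) := Matrix (Fin n) (Fin n) ℂ

open Polynomial

/-- Newton iteration: in a commutative ℂ-algebra, if `u` is a unit and `y` is a unit with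
`(y^2 - u)^(2^k) = 0`, then `u` has a square root. -/
lemma comm_newton_aux {R : Type*} [CommRing R] [Algebra ℂ R] (u : R) (hu : IsUnit u) :
    ∀ k : ℕ, ∀ y : R, IsUnit y → (y ^ 2 - u) ^ (2 ^ k) = 0 → ∃ v : R, v ^ 2 = u := by
  intro k
  induction k with
  | zero =>
    intro y _ h
    exact ⟨y, by simpa [sub_eq_zero] using h⟩
  | succ k ih =>
    intro y hy hd
    obtain ⟨yu, rfl⟩ := hy
    set c : R := ((yu⁻¹ : Rˣ) : R) with hcdef
    have hc : (yu : R) * c = 1 := yu.mul_inv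
    set h : R := algebraMap ℂ R (2⁻¹ : ℂ) with hhdef
    have h2 : (2 : R) * h = 1 := by
      have e2 : (2 : R) = algebraMap ℂ R 2 := (map_ofNat (algebraMap ℂ R) 2).symm
      rw [e2, hhdef, ← _root_.map_mul]
      norm_num
    set y₁ : R := h * ((yu : R) + u * c) with hy₁
    have key : y₁ ^ 2 - u = (h * (((yu : R) ^ 2 - u) * c)) ^ 2 := by
      rw [hy₁]
      linear_combination (h^2*(-((yu:R)^3*c) - (yu:R)^2 + 2*u*(yu:R)*c + 4*u)) * hc +
        (u*(2*h+1)) * h2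
    have hd1 : (y₁ ^ 2 - u) ^ (2 ^ k) = 0 := by
      rw [key, ← pow_mul]
      have e : 2 * 2 ^ k = 2 ^ (k+1) := by ring
      rw [e, mul_pow, mul_pow, hd, zero_mul, mul_zero]
    have hy1u : IsUnit y₁ := by
      have hnil : IsNilpotent (y₁ ^ 2 - u) := ⟨2 ^ k, hd1⟩
      have : IsUnit (y₁ ^ 2) := by
        have := hnil.isUnit_add_left_of_commute hu (Commute.all _ _)
        simpa using this
      rw [sq] at this
      exact isUnit_of_mul_isUnit_left this
    exact ih y₁ hy1u hd1

/-- For a monic complex polynomial χ, there is a polynomial p with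
`χ ∣ (p^2 - X)^(χ.natDegree + 1)`: p interpolates square roots at the roots of χ. -/
lemma poly_init_aux (χ : ℂ[X]) (hm : χ.Monic) :
    ∃ p : ℂ[X], χ ∣ (p ^ 2 - X) ^ (χ.natDegree + 1) := by
  classical
  have hsq : ∀ z : ℂ, ∃ w : ℂ, w ^ 2 = z := fun z =>
    IsAlgClosed.exists_pow_nat_eq z (n := 2) (by norm_num)
  choose s hs using hsq
  set Λ : Finset ℂ := χ.roots.toFinset with hΛ
  set p : ℂ[X] := Lagrange.interpolate Λ id s with hp
  refine ⟨p, ?_⟩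
  set N := χ.natDegree + 1
  set g : ℂ[X] := p ^ 2 - X with hg
  set mred : ℂ[X] := ∏ l ∈ Λ, (X - C l) with hmred
  have hroot : ∀ l ∈ Λ, IsRoot g l := by
    intro l hl
    have hev : eval l p = s l := by
      rw [hp]
      simpa using Lagrange.eval_interpolate_at_node s (Set.injOn_id _) hl
    simp only [hg, IsRoot.def, eval_sub, eval_pow, eval_X, hev, hs, sub_self]
  have hdvd1 : mred ∣ g := by
    refine Finset.prod_dvd_of_coprime ?_ (fun l hl => (dvd_iff_isRoot).2 (hroot l hl))
    exact (Polynomial.pairwise_coprime_X_sub_C Function.injective_id).set_pairwise _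
  have hsplit : χ = (Multiset.map (fun a => X - C a) χ.roots).prod :=
    (IsAlgClosed.splits χ).eq_prod_roots_of_monic hm
  have hdvd2 : χ ∣ mred ^ N := by
    rw [hsplit, Finset.prod_multiset_map_count]
    rw [hmred, ← Finset.prod_pow]
    refine Finset.prod_dvd_prod_of_dvd _ _ (fun l hl => ?_)
    refine pow_dvd_pow _ ?_
    calc Multiset.count l χ.roots ≤ Multiset.card χ.roots := Multiset.count_le_card _ _
      _ ≤ χ.natDegree := card_roots' χ
      _ ≤ N := Nat.le_succ _
  exact hdvd2.trans (pow_dvd_pow_of_dvd hdvd1 N)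

/-- If χ is monic with nonzero constant coefficient, then X has a polynomial square root
modulo χ. -/
lemma exists_sqrt_mod_aux (χ : ℂ[X]) (hm : χ.Monic) (hc0 : χ.coeff 0 ≠ 0) :
    ∃ q : ℂ[X], χ ∣ q ^ 2 - X := by
  classical
  set I : Ideal ℂ[X] := Ideal.span {χ} with hI
  let S := ℂ[X] ⧸ I
  let mk : ℂ[X] →ₐ[ℂ] S := Ideal.Quotient.mkₐ ℂ I
  have hmem : ∀ r : ℂ[X], mk r = 0 ↔ χ ∣ r := by
    intro r
    rw [show mk r = Ideal.Quotient.mk I r from rfl, Ideal.Quotient.eq_zero_iff_mem, hI,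
      Ideal.mem_span_singleton]
  set u : S := mk X with hu
  have huu : IsUnit u := by
    refine IsUnit.of_mul_eq_one (a := u) (mk (C (-(χ.coeff 0)⁻¹) * χ.divX)) ?_
    have h2 : mk χ = 0 := (hmem χ).2 dvd_rfl
    have h3 : mk (X * χ.divX + C (χ.coeff 0)) = 0 := by rw [X_mul_divX_add]; exact h2
    have h4 : u * mk χ.divX = - mk (C (χ.coeff 0)) := by
      rw [hu, ← _root_.map_mul, eq_neg_iff_add_eq_zero, ← _root_.map_add]
      exact h3
    calc u * mk (C (-(χ.coeff 0)⁻¹) * χ.divX)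
        = mk (C (-(χ.coeff 0)⁻¹)) * (u * mk χ.divX) := by rw [_root_.map_mul]; ring
      _ = mk (C (-(χ.coeff 0)⁻¹)) * (- mk (C (χ.coeff 0))) := by rw [h4]
      _ = mk (C ((χ.coeff 0)⁻¹ * χ.coeff 0)) := by
            rw [← _root_.map_neg, ← _root_.map_mul, ← _root_.map_neg, ← _root_.map_mul]; ring_nf
      _ = 1 := by rw [inv_mul_cancel₀ hc0, _root_.map_one, _root_.map_one]
  obtain ⟨p, hp⟩ := poly_init_aux χ hm
  set N := χ.natDegree + 1 with hN
  set y₀ : S := mk p with hy₀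
  have hdN : (y₀ ^ 2 - u) ^ N = 0 := by
    rw [hy₀, hu, ← _root_.map_pow, ← _root_.map_sub, ← _root_.map_pow, hmem]
    exact hp
  have hy₀u : IsUnit y₀ := by
    have hnil : IsNilpotent (y₀ ^ 2 - u) := ⟨N, hdN⟩
    have : IsUnit (y₀ ^ 2) := by
      have := hnil.isUnit_add_left_of_commute huu (Commute.all _ _)
      simpa using this
    rw [sq] at this
    exact isUnit_of_mul_isUnit_left this
  have hd2 : (y₀ ^ 2 - u) ^ (2 ^ N) = 0 :=
    pow_eq_zero_of_le (Nat.le_of_lt (Nat.lt_two_pow_self (n := N))) hdN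
  obtain ⟨v, hv⟩ := comm_newton_aux u huu N y₀ hy₀u hd2
  obtain ⟨q, rfl⟩ := Ideal.Quotient.mkₐ_surjective ℂ I v
  refine ⟨q, ?_⟩
  rw [← hmem, _root_.map_sub, _root_.map_pow]
  rw [show Ideal.Quotient.mkₐ ℂ I q = mk q from rfl] at hv ⊢
  rw [hv, hu, sub_self]

lemma good_pow_aux {n : ℕ} (A W : Mat n) (h : A * W = Wᵀ * A) (k : ℕ) :
    A * W ^ k = (W ^ k)ᵀ * A := by
  induction k with
  | zero => simp
  | succ k ih =>
    rw [pow_succ, ← mul_assoc, ih, mul_assoc, h, ← mul_assoc, ← pow_succ, pow_succ',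
      transpose_mul]

lemma transpose_algebraMap_aux {n : ℕ} (a : ℂ) :
    (algebraMap ℂ (Mat n) a)ᵀ = algebraMap ℂ (Mat n) a := by
  rw [Algebra.algebraMap_eq_smul_one, transpose_smul, transpose_one]

lemma good_aeval_aux {n : ℕ} (A W : Mat n) (h : A * W = Wᵀ * A) (q : ℂ[X]) :
    A * aeval W q = (aeval W q)ᵀ * A := by
  induction q using Polynomial.induction_on' with
  | add p r hp hr => rw [_root_.map_add, mul_add, transpose_add, add_mul, hp, hr]
  | monomial k a =>
    rw [aeval_monomial, transpose_mul, transpose_algebraMap_aux, ← mul_assoc,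
      ← Algebra.commutes a A, mul_assoc, good_pow_aux A W h k, ← mul_assoc]
    rw [Algebra.commutes a ((W ^ k)ᵀ)]

/-- Two skew-symmetric `n×n` complex matrix pencils `λA − B` and `λC − D` are strictly
equivalent (`QAR = C`, `QBR = D` with `Q, R` invertible) if and only if they are
congruent (`SᵀAS = C`, `SᵀBS = D` with `S` invertible). -/
theorem skewsymmetric_pencils_congruent_iff_strictly_equivalent
    (n : ℕ) (A B C D : Mat n)
    (hA : Aᵀ = -A) (hB : Bᵀ = -B) (hC : Cᵀ = -C) (hD : Dᵀ = -D) :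
    (∃ Q R : Mat n, IsUnit Q ∧ IsUnit R ∧ Q * A * R = C ∧ Q * B * R = D) ↔
      (∃ S : Mat n, IsUnit S ∧ Sᵀ * A * S = C ∧ Sᵀ * B * S = D) := by
  constructor
  · rintro ⟨Q, R, hQ, hR, h1, h2⟩
    have hQd : IsUnit Q.det := (isUnit_iff_isUnit_det Q).1 hQ
    have hRd : IsUnit R.det := (isUnit_iff_isUnit_det R).1 hR
    have hQtd : IsUnit Qᵀ.det := by rw [det_transpose]; exact hQd
    set W : Mat n := R * Qᵀ⁻¹ with hWdef
    have hWt : Wᵀ = Q⁻¹ * Rᵀ := by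
      rw [hWdef, transpose_mul, transpose_nonsing_inv, transpose_transpose]
    have hWd : IsUnit W.det := by
      rw [hWdef, det_mul, det_nonsing_inv]
      exact hRd.mul (isUnit_ringInverse.2 hQtd)
    have hWu : IsUnit W := (isUnit_iff_isUnit_det W).2 hWd
    -- key transposed equivalences
    have EA : Rᵀ * A * Qᵀ = Q * A * R := by
      have h1t : Rᵀ * Aᵀ * Qᵀ = Cᵀ := by rw [← h1, transpose_mul, transpose_mul, mul_assoc]
      rw [hA, hC, mul_neg, neg_mul] at h1t
      have := neg_injective h1t
      exact this.trans h1.symm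
    have EB : Rᵀ * B * Qᵀ = Q * B * R := by
      have h2t : Rᵀ * Bᵀ * Qᵀ = Dᵀ := by rw [← h2, transpose_mul, transpose_mul, mul_assoc]
      rw [hB, hD, mul_neg, neg_mul] at h2t
      have := neg_injective h2t
      exact this.trans h2.symm
    have hAW : A * W = Wᵀ * A := by
      rw [hWt, hWdef]
      have e1 : Rᵀ * A = Q * A * R * Qᵀ⁻¹ := by
        rw [← EA, mul_nonsing_inv_cancel_right _ _ hQtd]
      calc A * (R * Qᵀ⁻¹) = Q⁻¹ * (Q * (A * (R * Qᵀ⁻¹))) :=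
            (nonsing_inv_mul_cancel_left _ _ hQd).symm
        _ = Q⁻¹ * (Q * A * R * Qᵀ⁻¹) := by
            rw [show Q * (A * (R * Qᵀ⁻¹)) = Q * A * R * Qᵀ⁻¹ by noncomm_ring]
        _ = Q⁻¹ * (Rᵀ * A) := by rw [← e1]
        _ = Q⁻¹ * Rᵀ * A := by rw [mul_assoc]
    have hBW : B * W = Wᵀ * B := by
      rw [hWt, hWdef]
      have e1 : Rᵀ * B = Q * B * R * Qᵀ⁻¹ := by
        rw [← EB, mul_nonsing_inv_cancel_right _ _ hQtd]
      calc B * (R * Qᵀ⁻¹) = Q⁻¹ * (Q * (B * (R * Qᵀ⁻¹))) :=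
            (nonsing_inv_mul_cancel_left _ _ hQd).symm
        _ = Q⁻¹ * (Q * B * R * Qᵀ⁻¹) := by
            rw [show Q * (B * (R * Qᵀ⁻¹)) = Q * B * R * Qᵀ⁻¹ by noncomm_ring]
        _ = Q⁻¹ * (Rᵀ * B) := by rw [← e1]
        _ = Q⁻¹ * Rᵀ * B := by rw [mul_assoc]
    -- square root of W as a polynomial in W
    have hc0 : W.charpoly.coeff 0 ≠ 0 := by
      intro h0
      have := det_eq_sign_charpoly_coeff W
      rw [h0, mul_zero] at this
      exact hWd.ne_zero this
    obtain ⟨q, hq⟩ := exists_sqrt_mod_aux W.charpoly (charpoly_monic W) hc0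
    set V : Mat n := aeval W q with hVdef
    have hVV : V * V = W := by
      obtain ⟨c, hcc⟩ := hq
      have : aeval W (q ^ 2 - X) = 0 := by
        rw [hcc, _root_.map_mul, aeval_self_charpoly, zero_mul]
      rw [_root_.map_sub, _root_.map_pow, aeval_X, sub_eq_zero] at this
      rw [hVdef, ← sq]
      exact this
    have hAV : A * V = Vᵀ * A := good_aeval_aux A W hAW q
    have hBV : B * V = Vᵀ * B := good_aeval_aux B W hBW q
    have hVd : IsUnit V.det := by
      have : V.det * V.det = W.det := by rw [← det_mul, hVV]
      exact isUnit_of_mul_isUnit_left (this ▸ hWd)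
    have hVu : IsUnit V := (isUnit_iff_isUnit_det V).2 hVd
    have hQt : IsUnit Qᵀ := (isUnit_iff_isUnit_det Qᵀ).2 hQtd
    refine ⟨V * Qᵀ, hVu.mul hQt, ?_, ?_⟩
    · calc (V * Qᵀ)ᵀ * A * (V * Qᵀ)
          = Q * (Vᵀ * A) * V * Qᵀ := by
            rw [transpose_mul, transpose_transpose]; noncomm_ring
        _ = Q * (A * V) * V * Qᵀ := by rw [← hAV]
        _ = Q * A * (V * V) * Qᵀ := by noncomm_ring
        _ = Q * A * W * Qᵀ := by rw [hVV]
        _ = Q * A * R * (Qᵀ⁻¹ * Qᵀ) := by rw [hWdef]; noncomm_ring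
        _ = C := by rw [nonsing_inv_mul _ hQtd, mul_one, h1]
    · calc (V * Qᵀ)ᵀ * B * (V * Qᵀ)
          = Q * (Vᵀ * B) * V * Qᵀ := by
            rw [transpose_mul, transpose_transpose]; noncomm_ring
        _ = Q * (B * V) * V * Qᵀ := by rw [← hBV]
        _ = Q * B * (V * V) * Qᵀ := by noncomm_ring
        _ = Q * B * W * Qᵀ := by rw [hVV]
        _ = Q * B * R * (Qᵀ⁻¹ * Qᵀ) := by rw [hWdef]; noncomm_ring
        _ = D := by rw [nonsing_inv_mul _ hQtd, mul_one, h2]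
  · rintro ⟨S, hS, e1, e2⟩
    have hSt : IsUnit Sᵀ := by
      rw [isUnit_iff_isUnit_det, det_transpose, ← isUnit_iff_isUnit_det]
      exact hS
    exact ⟨Sᵀ, S, hSt, hS, e1, e2⟩

end
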